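/- (Proposition, Section 4.2: BIBO stabilization of neutral systems with time-varying delays.) Let M_inf^K ≥ 0 be such that ‖𝒦∗φ‖_∞ ≤ M_inf^K·‖φ‖_∞ for every bounded φ vanishing on (−∞,0]. Let M_inf^cl ≥ 0 be such that for every bounded w : ℝ → ℂ^n and every neutral closed-loop auxiliary solution z with input w for which z and ż are bounded, one has both ‖z‖_∞ ≤ M_inf^cl·‖w‖_∞ and ‖ż‖_∞ ≤ M_inf^cl·‖w‖_∞; let M_inf^clnom, M_inf^clnomd ≥ 0 be analogous gains for neutral closed-loop nominal solutions v with reference r. Assume M_inf^cl·( Σ_{j=1}^J μ_j‖A_j‖ + Σ_{k=1}^K ν_k‖B_k‖·M_inf^K + 2·Σ_{ℓ=1}^L ‖A_{−ℓ}‖ + ε·‖h‖_∞ ) < 1. Then there exists C ≥ 0, depending only on the data, such that for every bounded reference r vanishing on (−∞,0], every neutral closed-loop nominal solution v satisfying the above gain bounds, and every neutral closed-loop time-varying solution x with x and ẋ bounded, one has ‖x‖_∞ ≤ C·‖r‖_∞. -/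

import Mathlib

open MeasureTheory

/-- The supremum norm over `t > 0`. -/
noncomputable def supNorm {E : Type*} [NormedAddCommGroup E] (f : ℝ → E) : ℝ :=
  ⨆ t : Set.Ioi (0 : ℝ), ‖f (t : ℝ)‖

/-- A function `ℝ → E` is bounded. -/
def IsBddFun {E : Type*} [NormedAddCommGroup E] (f : ℝ → E) : Prop :=
  ∃ C, ∀ t, ‖f t‖ ≤ C

/-- Convolution of the controller kernel `𝒦` (a matrix-valued measure, given by
a density `k` with respect to a positive measure `μK`) with a signal `φ`:
`(𝒦∗φ)(t) = ∫ d𝒦(θ) φ(t−θ)`. -/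
noncomputable def Kconv {n p : ℕ} (μK : Measure ℝ)
    (k : ℝ → EuclideanSpace ℂ (Fin n) →L[ℂ] EuclideanSpace ℂ (Fin p))
    (φ : ℝ → EuclideanSpace ℂ (Fin n)) (t : ℝ) : EuclideanSpace ℂ (Fin p) :=
  ∫ θ, (k θ) (φ (t - θ)) ∂μK


set_option linter.unusedSectionVars false
set_option linter.unusedVariables false
set_option maxHeartbeats 1000000

section helpers
variable {E : Type*} [NormedAddCommGroup E] [NormedSpace ℝ E]

instance : Nonempty (Set.Ioi (0 : ℝ)) := ⟨⟨1, by norm_num⟩⟩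

lemma bdd_range {f : ℝ → E} (hf : IsBddFun f) :
    BddAbove (Set.range fun t : Set.Ioi (0:ℝ) => ‖f (t : ℝ)‖) := by
  obtain ⟨C, hC⟩ := hf
  exact ⟨C, by rintro y ⟨t, rfl⟩; exact hC t⟩

lemma le_supNorm {f : ℝ → E} (hf : IsBddFun f) {t : ℝ} (ht : 0 < t) :
    ‖f t‖ ≤ supNorm f :=
  le_ciSup (bdd_range hf) (⟨t, ht⟩ : Set.Ioi (0:ℝ))

lemma supNorm_nonneg' {f : ℝ → E} (hf : IsBddFun f) : 0 ≤ supNorm f :=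
  le_trans (norm_nonneg _) (le_supNorm hf one_pos)

lemma supNorm_le {f : ℝ → E} {C : ℝ} (h : ∀ t, 0 < t → ‖f t‖ ≤ C) :
    supNorm f ≤ C :=
  ciSup_le fun t => h t t.2

lemma norm_le_supNorm_all {f : ℝ → E} (hf : IsBddFun f)
    (h0 : ∀ t ≤ (0:ℝ), f t = 0) (t : ℝ) : ‖f t‖ ≤ supNorm f := by
  rcases le_or_gt t 0 with ht | ht
  · rw [h0 t ht]; simpa using supNorm_nonneg' hf
  · exact le_supNorm hf ht

lemma deriv_vanish {x x' : ℝ → E} (hx : ∀ t, HasDerivAt x (x' t) t)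
    (h0 : ∀ t ≤ (0:ℝ), x t = 0) : ∀ t ≤ (0:ℝ), x' t = 0 := by
  intro t ht
  have h1 : HasDerivWithinAt x (x' t) (Set.Iic 0) t := (hx t).hasDerivWithinAt
  have h2 : HasDerivWithinAt x (0 : E) (Set.Iic 0) t := by
    have : HasDerivWithinAt (fun _ : ℝ => (0:E)) 0 (Set.Iic 0) t :=
      (hasDerivAt_const t (0:E)).hasDerivWithinAt
    exact this.congr (fun s hs => h0 s hs) (h0 t ht)
  have hu : UniqueDiffWithinAt ℝ (Set.Iic (0:ℝ)) t :=
    uniqueDiffOn_Iic 0 t ht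
  rw [← h1.derivWithin hu, ← h2.derivWithin hu]

lemma mvt_bound {x x' : ℝ → E} (hx : ∀ t, HasDerivAt x (x' t) t) {C : ℝ}
    (hC : ∀ s, ‖x' s‖ ≤ C) (a b : ℝ) : ‖x a - x b‖ ≤ C * |a - b| := by
  have := Convex.norm_image_sub_le_of_norm_hasDerivWithin_le
    (f := x) (f' := x') (C := C) (s := Set.univ)
    (fun s _ => (hx s).hasDerivWithinAt) (fun s _ => hC s)
    convex_univ (Set.mem_univ b) (Set.mem_univ a)
  simpa [Real.norm_eq_abs] using this
end helpers

section kconv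
variable {n p : ℕ} {μK : Measure ℝ} [IsFiniteMeasure μK]
  {k : ℝ → EuclideanSpace ℂ (Fin n) →L[ℂ] EuclideanSpace ℂ (Fin p)}

lemma kconv_meas (hkmeas : StronglyMeasurable k)
    {φ : ℝ → EuclideanSpace ℂ (Fin n)} (hφ : StronglyMeasurable φ) (t : ℝ) :
    AEStronglyMeasurable (fun θ => k θ (φ (t - θ))) μK :=
  (isBoundedBilinearMap_apply.continuous.comp_stronglyMeasurable
    (hkmeas.prodMk (hφ.comp_measurable
      (measurable_const.sub measurable_id)))).aestronglyMeasurable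

lemma kconv_term_bound {Ck : ℝ} (hk : ∀ θ, ‖k θ‖ ≤ Ck)
    {φ : ℝ → EuclideanSpace ℂ (Fin n)} {Cφ : ℝ} (hφ : ∀ s, ‖φ s‖ ≤ Cφ)
    (t θ : ℝ) : ‖k θ (φ (t - θ))‖ ≤ Ck * Cφ :=
  le_trans ((k θ).le_opNorm _)
    (mul_le_mul (hk θ) (hφ _) (norm_nonneg _) (le_trans (norm_nonneg _) (hk θ)))

lemma kconv_integrable (hkmeas : StronglyMeasurable k) {Ck : ℝ}
    (hk : ∀ θ, ‖k θ‖ ≤ Ck) {φ : ℝ → EuclideanSpace ℂ (Fin n)}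
    (hφm : StronglyMeasurable φ) {Cφ : ℝ} (hφ : ∀ s, ‖φ s‖ ≤ Cφ) (t : ℝ) :
    Integrable (fun θ => k θ (φ (t - θ))) μK :=
  (integrable_const (Ck * Cφ)).mono' (kconv_meas hkmeas hφm t)
    (ae_of_all _ fun θ => kconv_term_bound hk hφ t θ)

lemma kconv_bdd (hkmeas : StronglyMeasurable k) {Ck : ℝ}
    (hk : ∀ θ, ‖k θ‖ ≤ Ck) {φ : ℝ → EuclideanSpace ℂ (Fin n)}
    (hφm : StronglyMeasurable φ) {Cφ : ℝ} (hφ : ∀ s, ‖φ s‖ ≤ Cφ) (t : ℝ) :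
    ‖Kconv μK k φ t‖ ≤ Ck * Cφ * (μK Set.univ).toReal :=
  norm_integral_le_of_norm_le_const (ae_of_all _ fun θ => kconv_term_bound hk hφ t θ)

lemma kconv_zero (hμKsupp : μK (Set.Iio 0) = 0)
    {φ : ℝ → EuclideanSpace ℂ (Fin n)} (h0 : ∀ s ≤ (0:ℝ), φ s = 0) {t : ℝ}
    (ht : t ≤ 0) : Kconv μK k φ t = 0 := by
  unfold Kconv
  refine integral_eq_zero_of_ae ?_
  have hae : ∀ᵐ θ ∂μK, 0 ≤ θ := by
    rw [ae_iff]
    convert hμKsupp using 2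
    ext θ; simp [Set.mem_Iio, not_le]
  filter_upwards [hae] with θ hθ
  simp [h0 (t - θ) (by linarith : t - θ ≤ 0)]

lemma kconv_hasDerivAt (hkmeas : StronglyMeasurable k) {Ck : ℝ}
    (hk : ∀ θ, ‖k θ‖ ≤ Ck) {x x' : ℝ → EuclideanSpace ℂ (Fin n)}
    (hx : ∀ t, HasDerivAt x (x' t) t) {Cx Cx' : ℝ}
    (hxb : ∀ s, ‖x s‖ ≤ Cx) (hx'b : ∀ s, ‖x' s‖ ≤ Cx') (t : ℝ) :
    HasDerivAt (Kconv μK k x) (Kconv μK k x' t) t := by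
  have hxc : Continuous x :=
    continuous_iff_continuousAt.2 fun s => (hx s).continuousAt
  have hx'm : StronglyMeasurable x' := by
    have : x' = deriv x := funext fun s => ((hx s).deriv).symm
    rw [this]; exact stronglyMeasurable_deriv x
  exact (hasDerivAt_integral_of_dominated_loc_of_deriv_le
    (F := fun s θ => k θ (x (s - θ))) (F' := fun s θ => k θ (x' (s - θ)))
    (μ := μK) (x₀ := t) (bound := fun _ => Ck * Cx')
    (Metric.ball_mem_nhds t one_pos)
    (Filter.Eventually.of_forall fun s => kconv_meas hkmeas hxc.stronglyMeasurable s)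
    (kconv_integrable hkmeas hk hxc.stronglyMeasurable hxb t)
    (kconv_meas hkmeas hx'm t)
    (ae_of_all _ fun θ s _ => kconv_term_bound hk hx'b s θ)
    (integrable_const _)
    (ae_of_all _ fun θ s _ => by
      have hg : HasDerivAt (fun u : ℝ => x (u - θ)) (x' (s - θ)) s := by
        simpa [Function.comp_def] using (hx (s - θ)).scomp (x := s) ((hasDerivAt_id s).sub_const θ)
      exact ((k θ).restrictScalars ℝ).hasFDerivAt.comp_hasDerivAt s hg)).2

end kconv

/-- (Proposition, Section 4.2: BIBO stabilization of neutral systems with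
time-varying delays by a stable controller `u = 𝒦∗x + r`.) -/
theorem stmt_6 (n p J K L : ℕ)
    (A : EuclideanSpace ℂ (Fin n) →L[ℂ] EuclideanSpace ℂ (Fin n))
    (Aj : Fin J → EuclideanSpace ℂ (Fin n) →L[ℂ] EuclideanSpace ℂ (Fin n))
    (Am : Fin L → EuclideanSpace ℂ (Fin n) →L[ℂ] EuclideanSpace ℂ (Fin n))
    (B : EuclideanSpace ℂ (Fin p) →L[ℂ] EuclideanSpace ℂ (Fin n))
    (Bk : Fin K → EuclideanSpace ℂ (Fin p) →L[ℂ] EuclideanSpace ℂ (Fin n))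
    -- Hypothesis (H)
    (hH : ∑ ℓ : Fin L, ‖Am ℓ‖ < 1)
    (D ε : ℝ) (hε0 : 0 ≤ ε) (hεD : ε ≤ D)
    (hd μ : Fin J → ℝ) (hμ0 : ∀ j, 0 ≤ μ j) (hμh : ∀ j, μ j ≤ hd j)
    (T ν : Fin K → ℝ) (hν0 : ∀ k, 0 ≤ ν k) (hνT : ∀ k, ν k ≤ T k)
    (Hl η : Fin L → ℝ) (hη0 : ∀ ℓ, 0 ≤ η ℓ) (hηH : ∀ ℓ, η ℓ ≤ Hl ℓ)
    (h : ℝ → ℂ) (hcont : ContinuousOn h (Set.Icc 0 (D + ε)))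
    (hNorm : ℝ) (hhNorm : hNorm = ⨆ θ : Set.Icc (0 : ℝ) (D + ε), ‖h (θ : ℝ)‖)
    (τ : Fin J → ℝ → ℝ) (hτm : ∀ j, Measurable (τ j))
    (hτb : ∀ j t, hd j - μ j ≤ τ j t ∧ τ j t ≤ hd j + μ j)
    (σ : Fin K → ℝ → ℝ) (hσm : ∀ k, Measurable (σ k))
    (hσb : ∀ k t, T k - ν k ≤ σ k t ∧ σ k t ≤ T k + ν k)
    (γ : Fin L → ℝ → ℝ) (hγm : ∀ ℓ, Measurable (γ ℓ))
    (hγb : ∀ ℓ t, Hl ℓ - η ℓ ≤ γ ℓ t ∧ γ ℓ t ≤ Hl ℓ + η ℓ)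
    (δ : ℝ → ℝ) (hδm : Measurable δ) (hδb : ∀ t, D - ε ≤ δ t ∧ δ t ≤ D + ε)
    -- the controller: a finite kernel measure supported on `[0,∞)`
    (μK : Measure ℝ) [IsFiniteMeasure μK] (hμKsupp : μK (Set.Iio 0) = 0)
    (k : ℝ → EuclideanSpace ℂ (Fin n) →L[ℂ] EuclideanSpace ℂ (Fin p))
    (hkmeas : StronglyMeasurable k) (hkbdd : ∃ Ck, ∀ θ, ‖k θ‖ ≤ Ck)
    (MK Mcl Mclnom Mclnomd : ℝ)
    (hMK0 : 0 ≤ MK) (hMcl0 : 0 ≤ Mcl) (hMclnom0 : 0 ≤ Mclnom)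
    (hMclnomd0 : 0 ≤ Mclnomd)
    -- the `L∞` gain of the controller
    (hKgain : ∀ φ : ℝ → EuclideanSpace ℂ (Fin n),
      IsBddFun φ → (∀ t ≤ (0 : ℝ), φ t = 0) →
      supNorm (Kconv μK k φ) ≤ MK * supNorm φ)
    -- gains of the neutral closed-loop auxiliary system
    (haux : ∀ w z z' : ℝ → EuclideanSpace ℂ (Fin n),
      IsBddFun w →
      (∀ t, HasDerivAt z (z' t) t) → (∀ t ≤ (0 : ℝ), z t = 0) →
      (∀ t > (0 : ℝ), z' t + ∑ ℓ : Fin L, Am ℓ (z' (t - Hl ℓ))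
        = A (z t) + ∑ j : Fin J, Aj j (z (t - hd j))
          + (∫ θ in (0 : ℝ)..D, h θ • z (t - θ))
          + B (Kconv μK k z t) + ∑ kk : Fin K, Bk kk (Kconv μK k z (t - T kk))
          + w t) →
      IsBddFun z → IsBddFun z' →
      supNorm z ≤ Mcl * supNorm w ∧ supNorm z' ≤ Mcl * supNorm w)
    -- the smallness condition
    (hsmall : Mcl * ((∑ j : Fin J, μ j * ‖Aj j‖)
      + (∑ kk : Fin K, ν kk * ‖Bk kk‖) * MK
      + 2 * (∑ ℓ : Fin L, ‖Am ℓ‖) + ε * hNorm) < 1) :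
    ∃ C : ℝ, 0 ≤ C ∧
      ∀ r : ℝ → EuclideanSpace ℂ (Fin p), IsBddFun r → (∀ t ≤ (0 : ℝ), r t = 0) →
      ∀ v v' : ℝ → EuclideanSpace ℂ (Fin n),
        (∀ t, HasDerivAt v (v' t) t) → (∀ t ≤ (0 : ℝ), v t = 0) →
        -- `v` is the neutral closed-loop nominal solution for the reference `r`
        (∀ t > (0 : ℝ), v' t + ∑ ℓ : Fin L, Am ℓ (v' (t - Hl ℓ))
          = A (v t) + ∑ j : Fin J, Aj j (v (t - hd j))
            + (∫ θ in (0 : ℝ)..D, h θ • v (t - θ))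
            + B (Kconv μK k v t) + ∑ kk : Fin K, Bk kk (Kconv μK k v (t - T kk))
            + B (r t) + ∑ kk : Fin K, Bk kk (r (t - T kk))) →
        supNorm v ≤ Mclnom * supNorm r → supNorm v' ≤ Mclnomd * supNorm r →
      ∀ x x' : ℝ → EuclideanSpace ℂ (Fin n),
        (∀ t, HasDerivAt x (x' t) t) → (∀ t ≤ (0 : ℝ), x t = 0) →
        -- `x` is the neutral closed-loop time-varying solution for `r`
        (∀ t > (0 : ℝ), x' t + ∑ ℓ : Fin L, Am ℓ (x' (t - γ ℓ t))
          = A (x t) + ∑ j : Fin J, Aj j (x (t - τ j t))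
            + (∫ θ in (0 : ℝ)..(δ t), h θ • x (t - θ))
            + B (Kconv μK k x t)
            + ∑ kk : Fin K, Bk kk (Kconv μK k x (t - σ kk t))
            + B (r t) + ∑ kk : Fin K, Bk kk (r (t - σ kk t))) →
        IsBddFun x → IsBddFun x' →
        supNorm x ≤ C * supNorm r := by
  obtain ⟨Ck, hCk⟩ := hkbdd
  -- basic facts about hNorm
  have hDε0 : (0:ℝ) ≤ D + ε := by linarith
  have hD0 : (0:ℝ) ≤ D := by linarith
  haveI : Nonempty (Set.Icc (0:ℝ) (D + ε)) := ⟨⟨0, by constructor <;> linarith⟩⟩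
  have hbddh : BddAbove (Set.range fun θ : Set.Icc (0:ℝ) (D+ε) => ‖h (θ:ℝ)‖) := by
    have h1 : BddAbove ((fun θ => ‖h θ‖) '' Set.Icc (0:ℝ) (D+ε)) :=
      isCompact_Icc.bddAbove_image hcont.norm
    have h2 : (Set.range fun θ : Set.Icc (0:ℝ) (D+ε) => ‖h (θ:ℝ)‖)
        = (fun θ => ‖h θ‖) '' Set.Icc (0:ℝ) (D+ε) := by
      ext y
      constructor
      · rintro ⟨θ, rfl⟩; exact ⟨θ, θ.2, rfl⟩
      · rintro ⟨θ, hθ, rfl⟩; exact ⟨⟨θ, hθ⟩, rfl⟩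
    rw [h2]; exact h1
  have hhb : ∀ θ ∈ Set.Icc (0:ℝ) (D+ε), ‖h θ‖ ≤ hNorm := by
    intro θ hθ
    rw [hhNorm]
    exact le_ciSup hbddh (⟨θ, hθ⟩ : Set.Icc (0:ℝ) (D+ε))
  have hNorm0 : 0 ≤ hNorm :=
    le_trans (norm_nonneg (h 0)) (hhb 0 ⟨le_rfl, hDε0⟩)
  -- constants
  set β : ℝ := (∑ j : Fin J, μ j * ‖Aj j‖)
      + (∑ kk : Fin K, ν kk * ‖Bk kk‖) * MK
      + 2 * (∑ ℓ : Fin L, ‖Am ℓ‖) + ε * hNorm with hβdef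
  have hβ0 : 0 ≤ β := by
    have h1 : (0:ℝ) ≤ ∑ j : Fin J, μ j * ‖Aj j‖ :=
      Finset.sum_nonneg fun j _ => mul_nonneg (hμ0 j) (norm_nonneg _)
    have h2 : (0:ℝ) ≤ ∑ kk : Fin K, ν kk * ‖Bk kk‖ :=
      Finset.sum_nonneg fun kk _ => mul_nonneg (hν0 kk) (norm_nonneg _)
    have h3 : (0:ℝ) ≤ ∑ ℓ : Fin L, ‖Am ℓ‖ :=
      Finset.sum_nonneg fun ℓ _ => norm_nonneg _
    have := mul_nonneg h2 hMK0
    have := mul_nonneg hε0 hNorm0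
    rw [hβdef]; nlinarith
  set CB : ℝ := ‖B‖ + ∑ kk : Fin K, ‖Bk kk‖ with hCBdef
  have hCB0 : 0 ≤ CB := by
    have : (0:ℝ) ≤ ∑ kk : Fin K, ‖Bk kk‖ :=
      Finset.sum_nonneg fun kk _ => norm_nonneg _
    rw [hCBdef]; positivity
  have hpos : 0 < 1 - Mcl * β := by linarith
  refine ⟨Mcl * CB / (1 - Mcl * β),
    div_nonneg (mul_nonneg hMcl0 hCB0) hpos.le, ?_⟩
  intro r hrb hr0 v v' hv hv0 heqv hvb hv'b x x' hx hx0 heqx hxb hx'b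
  clear heqv hvb hv'b hv hv0
  -- derived facts about x
  obtain ⟨Cx0, hCx0⟩ := hxb
  obtain ⟨Cx'0, hCx'0⟩ := hx'b
  have hx'0 : ∀ t ≤ (0:ℝ), x' t = 0 := deriv_vanish hx hx0
  have hxc : Continuous x := continuous_iff_continuousAt.2 fun s => (hx s).continuousAt
  have hx'm : StronglyMeasurable x' := by
    have : x' = deriv x := funext fun s => ((hx s).deriv).symm
    rw [this]; exact stronglyMeasurable_deriv x
  set Sx : ℝ := supNorm x with hSxdef
  set Sx' : ℝ := supNorm x' with hSx'def
  set Sr : ℝ := supNorm r with hSrdef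
  set M : ℝ := max Sx Sx' with hMdef
  have hxall : ∀ s, ‖x s‖ ≤ Sx := norm_le_supNorm_all ⟨Cx0, hCx0⟩ hx0
  have hx'all : ∀ s, ‖x' s‖ ≤ Sx' := norm_le_supNorm_all ⟨Cx'0, hCx'0⟩ hx'0
  have hrall : ∀ s, ‖r s‖ ≤ Sr := norm_le_supNorm_all hrb hr0
  have hSx0 : 0 ≤ Sx := supNorm_nonneg' ⟨Cx0, hCx0⟩
  have hSx'0 : 0 ≤ Sx' := supNorm_nonneg' ⟨Cx'0, hCx'0⟩
  have hSr0 : 0 ≤ Sr := supNorm_nonneg' hrb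
  have hSxM : Sx ≤ M := le_max_left _ _
  have hSx'M : Sx' ≤ M := le_max_right _ _
  have hM0 : 0 ≤ M := le_trans hSx0 hSxM
  -- the controller convolution of x'
  have hKX'bdd : IsBddFun (Kconv μK k x') :=
    ⟨Ck * Cx'0 * (μK Set.univ).toReal,
      fun s => kconv_bdd hkmeas hCk hx'm hCx'0 s⟩
  have hKgain' : supNorm (Kconv μK k x') ≤ MK * Sx' :=
    hKgain x' ⟨Cx'0, hCx'0⟩ hx'0
  have hKX'all : ∀ s, ‖Kconv μK k x' s‖ ≤ MK * Sx' := by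
    intro s
    rcases le_or_gt s 0 with hs | hs
    · rw [kconv_zero hμKsupp hx'0 hs]
      simpa using mul_nonneg hMK0 hSx'0
    · exact le_trans (le_supNorm hKX'bdd hs) hKgain'
  have hKd : ∀ s, HasDerivAt (Kconv μK k x) (Kconv μK k x' s) s :=
    kconv_hasDerivAt hkmeas hCk hx hCx0 hCx'0
  -- continuity of the distributed-delay integrand
  have hcf : ∀ t : ℝ, ContinuousOn (fun θ => h θ • x (t - θ)) (Set.Icc 0 (D+ε)) :=
    fun t => hcont.smul ((hxc.comp (continuous_const.sub continuous_id)).continuousOn)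
  -- the perturbation input w
  set w : ℝ → EuclideanSpace ℂ (Fin n) := fun t =>
    x' t + (∑ ℓ : Fin L, Am ℓ (x' (t - Hl ℓ))) - A (x t)
      - (∑ j : Fin J, Aj j (x (t - hd j)))
      - (∫ θ in (0:ℝ)..D, h θ • x (t - θ))
      - B (Kconv μK k x t)
      - (∑ kk : Fin K, Bk kk (Kconv μK k x (t - T kk))) with hwdef
  -- the key bound on w
  have hw : ∀ t, ‖w t‖ ≤ β * M + CB * Sr := by
    have hRHS0 : 0 ≤ β * M + CB * Sr :=
      add_nonneg (mul_nonneg hβ0 hM0) (mul_nonneg hCB0 hSr0)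
    intro t
    rcases le_or_gt t 0 with ht | ht
    · -- everything vanishes for t ≤ 0
      have e1 : x' t = 0 := hx'0 t ht
      have e2 : x t = 0 := hx0 t ht
      have e3 : ∀ ℓ, x' (t - Hl ℓ) = 0 := fun ℓ => hx'0 _ (by
        have := hηH ℓ; have := hη0 ℓ; linarith)
      have e4 : ∀ j, x (t - hd j) = 0 := fun j => hx0 _ (by
        have := hμh j; have := hμ0 j; linarith)
      have e5 : Kconv μK k x t = 0 := kconv_zero hμKsupp hx0 ht
      have e6 : ∀ kk : Fin K, Kconv μK k x (t - T kk) = 0 := fun kk =>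
        kconv_zero hμKsupp hx0 (by have := hνT kk; have := hν0 kk; linarith)
      have e7 : (∫ θ in (0:ℝ)..D, h θ • x (t - θ)) = 0 := by
        have hcg : Set.EqOn (fun θ => h θ • x (t - θ)) 0 (Set.uIcc (0:ℝ) D) := by
          intro θ hθ
          rw [Set.uIcc_of_le hD0] at hθ
          simp [hx0 (t - θ) (by linarith [hθ.1] : t - θ ≤ 0)]
        rw [intervalIntegral.integral_congr hcg]
        simp
      have s3 : (∑ ℓ : Fin L, Am ℓ (x' (t - Hl ℓ))) = 0 :=
        Finset.sum_eq_zero fun ℓ _ => by rw [e3 ℓ, map_zero]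
      have s4 : (∑ j : Fin J, Aj j (x (t - hd j))) = 0 :=
        Finset.sum_eq_zero fun j _ => by rw [e4 j, map_zero]
      have s6 : (∑ kk : Fin K, Bk kk (Kconv μK k x (t - T kk))) = 0 :=
        Finset.sum_eq_zero fun kk _ => by rw [e6 kk, map_zero]
      simp only [hwdef, e1, e2, e5, e7, s3, s4, s6]
      simpa using hRHS0
    · -- for t > 0 rewrite w using the time-varying equation
      have hx't := eq_sub_of_add_eq (heqx t ht)
      -- integrability on the two adjacent intervals
      have hsub1 : Set.uIcc (0:ℝ) D ⊆ Set.Icc 0 (D+ε) := by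
        rw [Set.uIcc_of_le hD0]
        exact Set.Icc_subset_Icc le_rfl (by linarith)
      have hmemD : D ∈ Set.uIcc (0:ℝ) (D+ε) := by
        rw [Set.uIcc_of_le hDε0]; exact ⟨hD0, by linarith⟩
      have hmemδ : δ t ∈ Set.uIcc (0:ℝ) (D+ε) := by
        rw [Set.uIcc_of_le hDε0]
        exact ⟨by linarith [(hδb t).1], (hδb t).2⟩
      have hsub2 : Set.uIcc D (δ t) ⊆ Set.Icc 0 (D+ε) := by
        rw [← Set.uIcc_of_le hDε0]
        exact Set.uIcc_subset_uIcc hmemD hmemδ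
      have hI1 : IntervalIntegrable (fun θ => h θ • x (t - θ)) volume 0 D :=
        (((hcf t).mono hsub1)).intervalIntegrable
      have hI2 : IntervalIntegrable (fun θ => h θ • x (t - θ)) volume D (δ t) :=
        (((hcf t).mono hsub2)).intervalIntegrable
      have hsplit : (∫ θ in (0:ℝ)..(δ t), h θ • x (t - θ))
          - (∫ θ in (0:ℝ)..D, h θ • x (t - θ))
          = ∫ θ in D..(δ t), h θ • x (t - θ) := by
        rw [← intervalIntegral.integral_add_adjacent_intervals hI1 hI2]
        abel
      have hwt : w t = (∑ ℓ : Fin L, (Am ℓ (x' (t - Hl ℓ)) - Am ℓ (x' (t - γ ℓ t))))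
          + (∑ j : Fin J, (Aj j (x (t - τ j t)) - Aj j (x (t - hd j))))
          + (∫ θ in D..(δ t), h θ • x (t - θ))
          + (∑ kk : Fin K, (Bk kk (Kconv μK k x (t - σ kk t))
              - Bk kk (Kconv μK k x (t - T kk))))
          + (B (r t) + ∑ kk : Fin K, Bk kk (r (t - σ kk t))) := by
        rw [← hsplit]
        simp only [hwdef]
        rw [hx't]
        simp only [Finset.sum_sub_distrib]
        abel
      -- bounds on the five pieces
      have b1 : ‖∑ ℓ : Fin L, (Am ℓ (x' (t - Hl ℓ)) - Am ℓ (x' (t - γ ℓ t)))‖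
          ≤ (2 * (∑ ℓ : Fin L, ‖Am ℓ‖)) * M := by
        calc ‖∑ ℓ : Fin L, (Am ℓ (x' (t - Hl ℓ)) - Am ℓ (x' (t - γ ℓ t)))‖
            ≤ ∑ ℓ : Fin L, ‖Am ℓ (x' (t - Hl ℓ)) - Am ℓ (x' (t - γ ℓ t))‖ :=
              norm_sum_le _ _
          _ ≤ ∑ ℓ : Fin L, ‖Am ℓ‖ * (2 * M) := by
              refine Finset.sum_le_sum fun ℓ _ => ?_
              rw [← map_sub]
              calc ‖Am ℓ (x' (t - Hl ℓ) - x' (t - γ ℓ t))‖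
                  ≤ ‖Am ℓ‖ * ‖x' (t - Hl ℓ) - x' (t - γ ℓ t)‖ := (Am ℓ).le_opNorm _
                _ ≤ ‖Am ℓ‖ * (2 * M) := by
                    refine mul_le_mul_of_nonneg_left ?_ (norm_nonneg _)
                    have := hx'all (t - Hl ℓ)
                    have := hx'all (t - γ ℓ t)
                    have := norm_sub_le (x' (t - Hl ℓ)) (x' (t - γ ℓ t))
                    linarith
          _ = (2 * (∑ ℓ : Fin L, ‖Am ℓ‖)) * M := by
              rw [← Finset.sum_mul]; ring
      have b2 : ‖∑ j : Fin J, (Aj j (x (t - τ j t)) - Aj j (x (t - hd j)))‖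
          ≤ (∑ j : Fin J, μ j * ‖Aj j‖) * M := by
        calc ‖∑ j : Fin J, (Aj j (x (t - τ j t)) - Aj j (x (t - hd j)))‖
            ≤ ∑ j : Fin J, ‖Aj j (x (t - τ j t)) - Aj j (x (t - hd j))‖ :=
              norm_sum_le _ _
          _ ≤ ∑ j : Fin J, (μ j * ‖Aj j‖) * M := by
              refine Finset.sum_le_sum fun j _ => ?_
              rw [← map_sub]
              have habs : |(t - τ j t) - (t - hd j)| ≤ μ j := by
                have h1 := (hτb j t).1
                have h2 := (hτb j t).2
                rw [abs_le]; constructor <;> [linarith; linarith]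
              have hdiff : ‖x (t - τ j t) - x (t - hd j)‖ ≤ μ j * Sx' := by
                calc ‖x (t - τ j t) - x (t - hd j)‖
                    ≤ Sx' * |(t - τ j t) - (t - hd j)| := mvt_bound hx hx'all _ _
                  _ ≤ Sx' * μ j := mul_le_mul_of_nonneg_left habs hSx'0
                  _ = μ j * Sx' := mul_comm _ _
              calc ‖Aj j (x (t - τ j t) - x (t - hd j))‖
                  ≤ ‖Aj j‖ * ‖x (t - τ j t) - x (t - hd j)‖ := (Aj j).le_opNorm _
                _ ≤ ‖Aj j‖ * (μ j * Sx') :=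
                    mul_le_mul_of_nonneg_left hdiff (norm_nonneg _)
                _ = (μ j * ‖Aj j‖) * Sx' := by ring
                _ ≤ (μ j * ‖Aj j‖) * M :=
                    mul_le_mul_of_nonneg_left hSx'M
                      (mul_nonneg (hμ0 j) (norm_nonneg _))
          _ = (∑ j : Fin J, μ j * ‖Aj j‖) * M := by rw [← Finset.sum_mul]
      have b3 : ‖∫ θ in D..(δ t), h θ • x (t - θ)‖ ≤ (ε * hNorm) * M := by
        have hbd : ∀ θ ∈ Set.uIoc D (δ t), ‖h θ • x (t - θ)‖ ≤ hNorm * Sx := by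
          intro θ hθ
          have hθ' : θ ∈ Set.Icc (0:ℝ) (D+ε) := hsub2 (Set.uIoc_subset_uIcc hθ)
          rw [norm_smul]
          exact mul_le_mul (hhb θ hθ') (hxall _) (norm_nonneg _) hNorm0
        calc ‖∫ θ in D..(δ t), h θ • x (t - θ)‖
            ≤ (hNorm * Sx) * |δ t - D| :=
              intervalIntegral.norm_integral_le_of_norm_le_const hbd
          _ ≤ (hNorm * Sx) * ε := by
              refine mul_le_mul_of_nonneg_left ?_ (mul_nonneg hNorm0 hSx0)
              rw [abs_le]
              constructor <;> [linarith [(hδb t).1]; linarith [(hδb t).2]]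
          _ = (ε * hNorm) * Sx := by ring
          _ ≤ (ε * hNorm) * M :=
              mul_le_mul_of_nonneg_left hSxM (mul_nonneg hε0 hNorm0)
      have b4 : ‖∑ kk : Fin K, (Bk kk (Kconv μK k x (t - σ kk t))
            - Bk kk (Kconv μK k x (t - T kk)))‖
          ≤ ((∑ kk : Fin K, ν kk * ‖Bk kk‖) * MK) * M := by
        calc ‖∑ kk : Fin K, (Bk kk (Kconv μK k x (t - σ kk t))
              - Bk kk (Kconv μK k x (t - T kk)))‖
            ≤ ∑ kk : Fin K, ‖Bk kk (Kconv μK k x (t - σ kk t))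
              - Bk kk (Kconv μK k x (t - T kk))‖ := norm_sum_le _ _
          _ ≤ ∑ kk : Fin K, ((ν kk * ‖Bk kk‖) * MK) * M := by
              refine Finset.sum_le_sum fun kk _ => ?_
              rw [← map_sub]
              have habs : |(t - σ kk t) - (t - T kk)| ≤ ν kk := by
                have h1 := (hσb kk t).1
                have h2 := (hσb kk t).2
                rw [abs_le]; constructor <;> [linarith; linarith]
              have hdiff : ‖Kconv μK k x (t - σ kk t) - Kconv μK k x (t - T kk)‖
                  ≤ (MK * Sx') * ν kk := by
                calc ‖Kconv μK k x (t - σ kk t) - Kconv μK k x (t - T kk)‖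
                    ≤ (MK * Sx') * |(t - σ kk t) - (t - T kk)| :=
                      mvt_bound hKd hKX'all _ _
                  _ ≤ (MK * Sx') * ν kk :=
                      mul_le_mul_of_nonneg_left habs (mul_nonneg hMK0 hSx'0)
              calc ‖Bk kk (Kconv μK k x (t - σ kk t) - Kconv μK k x (t - T kk))‖
                  ≤ ‖Bk kk‖ * ‖Kconv μK k x (t - σ kk t) - Kconv μK k x (t - T kk)‖ :=
                    (Bk kk).le_opNorm _
                _ ≤ ‖Bk kk‖ * ((MK * Sx') * ν kk) :=
                    mul_le_mul_of_nonneg_left hdiff (norm_nonneg _)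
                _ = ((ν kk * ‖Bk kk‖) * MK) * Sx' := by ring
                _ ≤ ((ν kk * ‖Bk kk‖) * MK) * M := by
                    refine mul_le_mul_of_nonneg_left hSx'M ?_
                    exact mul_nonneg (mul_nonneg (hν0 kk) (norm_nonneg _)) hMK0
          _ = ((∑ kk : Fin K, ν kk * ‖Bk kk‖) * MK) * M := by
              rw [← Finset.sum_mul, ← Finset.sum_mul]
      have b5 : ‖B (r t) + ∑ kk : Fin K, Bk kk (r (t - σ kk t))‖ ≤ CB * Sr := by
        calc ‖B (r t) + ∑ kk : Fin K, Bk kk (r (t - σ kk t))‖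
            ≤ ‖B (r t)‖ + ‖∑ kk : Fin K, Bk kk (r (t - σ kk t))‖ := norm_add_le _ _
          _ ≤ ‖B‖ * Sr + (∑ kk : Fin K, ‖Bk kk‖) * Sr := by
              refine add_le_add ?_ ?_
              · exact le_trans (B.le_opNorm _)
                  (mul_le_mul_of_nonneg_left (hrall t) (norm_nonneg _))
              · calc ‖∑ kk : Fin K, Bk kk (r (t - σ kk t))‖
                    ≤ ∑ kk : Fin K, ‖Bk kk (r (t - σ kk t))‖ := norm_sum_le _ _
                  _ ≤ ∑ kk : Fin K, ‖Bk kk‖ * Sr :=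
                      Finset.sum_le_sum fun kk _ => le_trans ((Bk kk).le_opNorm _)
                        (mul_le_mul_of_nonneg_left (hrall _) (norm_nonneg _))
                  _ = (∑ kk : Fin K, ‖Bk kk‖) * Sr := by rw [← Finset.sum_mul]
          _ = CB * Sr := by rw [hCBdef]; ring
      rw [hwt]
      have hn1 := norm_add_le
        ((∑ ℓ : Fin L, (Am ℓ (x' (t - Hl ℓ)) - Am ℓ (x' (t - γ ℓ t))))
          + (∑ j : Fin J, (Aj j (x (t - τ j t)) - Aj j (x (t - hd j))))
          + (∫ θ in D..(δ t), h θ • x (t - θ))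
          + (∑ kk : Fin K, (Bk kk (Kconv μK k x (t - σ kk t))
              - Bk kk (Kconv μK k x (t - T kk)))))
        (B (r t) + ∑ kk : Fin K, Bk kk (r (t - σ kk t)))
      have hn2 := norm_add_le
        ((∑ ℓ : Fin L, (Am ℓ (x' (t - Hl ℓ)) - Am ℓ (x' (t - γ ℓ t))))
          + (∑ j : Fin J, (Aj j (x (t - τ j t)) - Aj j (x (t - hd j))))
          + (∫ θ in D..(δ t), h θ • x (t - θ)))
        (∑ kk : Fin K, (Bk kk (Kconv μK k x (t - σ kk t))
              - Bk kk (Kconv μK k x (t - T kk))))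
      have hn3 := norm_add_le
        ((∑ ℓ : Fin L, (Am ℓ (x' (t - Hl ℓ)) - Am ℓ (x' (t - γ ℓ t))))
          + (∑ j : Fin J, (Aj j (x (t - τ j t)) - Aj j (x (t - hd j)))))
        (∫ θ in D..(δ t), h θ • x (t - θ))
      have hn4 := norm_add_le
        (∑ ℓ : Fin L, (Am ℓ (x' (t - Hl ℓ)) - Am ℓ (x' (t - γ ℓ t))))
        (∑ j : Fin J, (Aj j (x (t - τ j t)) - Aj j (x (t - hd j))))
      have hfin : β * M = (∑ j : Fin J, μ j * ‖Aj j‖) * M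
          + ((∑ kk : Fin K, ν kk * ‖Bk kk‖) * MK) * M
          + (2 * (∑ ℓ : Fin L, ‖Am ℓ‖)) * M + (ε * hNorm) * M := by
        rw [hβdef]; ring
      linarith
  -- w as the auxiliary input
  have hwbdd : IsBddFun w := ⟨β * M + CB * Sr, hw⟩
  have heqw : ∀ t > (0:ℝ), x' t + ∑ ℓ : Fin L, Am ℓ (x' (t - Hl ℓ))
      = A (x t) + ∑ j : Fin J, Aj j (x (t - hd j))
        + (∫ θ in (0 : ℝ)..D, h θ • x (t - θ))
        + B (Kconv μK k x t) + ∑ kk : Fin K, Bk kk (Kconv μK k x (t - T kk))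
        + w t := by
    intro t ht
    simp only [hwdef]
    abel
  obtain ⟨hz1, hz2⟩ := haux w x x' hwbdd hx hx0 heqw ⟨Cx0, hCx0⟩ ⟨Cx'0, hCx'0⟩
  have hsupw : supNorm w ≤ β * M + CB * Sr := supNorm_le fun t _ => hw t
  have hMclw : Mcl * supNorm w ≤ Mcl * (β * M + CB * Sr) :=
    mul_le_mul_of_nonneg_left hsupw hMcl0
  have hMle : M ≤ Mcl * (β * M + CB * Sr) :=
    max_le (le_trans hz1 hMclw) (le_trans hz2 hMclw)
  have hfinal : M ≤ (Mcl * CB / (1 - Mcl * β)) * Sr := by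
    rw [div_mul_eq_mul_div, le_div_iff₀ hpos]
    nlinarith
  exact le_trans hSxM hfinal
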